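/- arXiv:1211.2251 — 3 statements merged into one kernel-verified Lean document; each statement's English description precedes it below -/
import Mathlib

section
/- There is a bijection between the independent k-subsets of the h-th power of a path on n vertices and the k-element subsets of a set with n - h*k + h elements (assuming n + h ≥ h*k). -/
open Finset

/-- The independent subsets of the h-th power of the path on vertices {1,...,n}:
subsets of {1,...,n} in which any two distinct elements differ by more than h. -/
def Indep (n h : ℕ) : Finset (Finset ℕ) :=
  (Finset.Icc 1 n).powerset.filter (fun S => ∀ a ∈ S, ∀ b ∈ S, a < b → h < b - a)

/-- The independent k-subsets. -/
def IndepK (n h k : ℕ) : Finset (Finset ℕ) :=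
  (Indep n h).filter (fun S => S.card = k)

lemma mem_IndepK {n h k : ℕ} {S : Finset ℕ} :
    S ∈ IndepK n h k ↔ (S ⊆ Finset.Icc 1 n ∧ ∀ a ∈ S, ∀ b ∈ S, a < b → h < b - a)
      ∧ S.card = k := by
  simp [IndepK, Indep, Finset.mem_filter, Finset.mem_powerset]

lemma IndepK_card {n h k : ℕ} {S : Finset ℕ} (hS : S ∈ IndepK n h k) : S.card = k :=
  (mem_IndepK.mp hS).2

lemma pow_card {k : ℕ} {t T : Finset ℕ} (hT : T ∈ Finset.powersetCard k t) : T.card = k :=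
  (Finset.mem_powersetCard.mp hT).2

lemma iterGap {k c : ℕ} {f : Fin k → ℕ} (hgap : ∀ i j : Fin k, i < j → f i + c ≤ f j) :
    ∀ (d : ℕ) (i j : Fin k), (i : ℕ) + d = (j : ℕ) → f i + c * d ≤ f j := by
  intro d
  induction d with
  | zero =>
    intro i j hij
    have : i = j := Fin.ext (by omega)
    subst this; simp
  | succ d ih =>
    intro i j hij
    have hj := j.isLt
    have hjk : (i : ℕ) + d < k := by omega
    have h1 := ih i ⟨(i : ℕ) + d, hjk⟩ rfl
    have h2 := hgap ⟨(i : ℕ) + d, hjk⟩ j (by rw [Fin.lt_def]; simp; omega)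
    have h3 : c * (d + 1) = c * d + c := by ring
    omega

lemma image_univ_orderEmb {s : Finset ℕ} {k : ℕ} (hc : s.card = k) :
    Finset.image (s.orderEmbOfFin hc) Finset.univ = s := by
  apply Finset.coe_injective
  rw [Finset.coe_image, Finset.coe_univ, Set.image_univ, Finset.range_orderEmbOfFin]

section main

variable {n h k : ℕ}

/-- gap estimate for members of IndepK -/
lemma indep_gap {S : Finset ℕ} (hS : S ∈ IndepK n h k) (i j : Fin k) (hij : i < j) :
    S.orderEmbOfFin (IndepK_card hS) i + (h + 1) ≤ S.orderEmbOfFin (IndepK_card hS) j := by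
  set f := S.orderEmbOfFin (IndepK_card hS) with hf
  have hmono : StrictMono f := (S.orderEmbOfFin (IndepK_card hS)).strictMono
  have h1 : f i < f j := hmono hij
  have h2 := (mem_IndepK.mp hS).1.2 (f i) (Finset.orderEmbOfFin_mem _ _ _)
      (f j) (Finset.orderEmbOfFin_mem _ _ _) h1
  omega

lemma indep_iterGap {S : Finset ℕ} (hS : S ∈ IndepK n h k) (i j : Fin k)
    (hij : (i : ℕ) ≤ (j : ℕ)) :
    S.orderEmbOfFin (IndepK_card hS) i + (h + 1) * ((j : ℕ) - (i : ℕ))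
      ≤ S.orderEmbOfFin (IndepK_card hS) j :=
  iterGap (indep_gap hS) ((j : ℕ) - (i : ℕ)) i j (by omega)

lemma indep_bounds {S : Finset ℕ} (hS : S ∈ IndepK n h k) (p : Fin k) :
    1 ≤ S.orderEmbOfFin (IndepK_card hS) p ∧ S.orderEmbOfFin (IndepK_card hS) p ≤ n := by
  have hm : S.orderEmbOfFin (IndepK_card hS) p ∈ S := Finset.orderEmbOfFin_mem _ _ _
  have := (mem_IndepK.mp hS).1.1 hm
  simpa [Finset.mem_Icc] using this

lemma indep_lower {S : Finset ℕ} (hS : S ∈ IndepK n h k) (p : Fin k) :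
    h * (p : ℕ) + (p : ℕ) + 1 ≤ S.orderEmbOfFin (IndepK_card hS) p := by
  have hp := p.isLt
  have h0 : (0 : ℕ) < k := by omega
  have h1 := indep_iterGap hS ⟨0, h0⟩ p (by simp)
  simp only [Fin.val_mk, Nat.sub_zero] at h1
  have h2 := (indep_bounds hS ⟨0, h0⟩).1
  have h3 : (h + 1) * (p : ℕ) = h * (p : ℕ) + (p : ℕ) := by ring
  omega

lemma indep_upper {S : Finset ℕ} (hS : S ∈ IndepK n h k) (p : Fin k) :
    S.orderEmbOfFin (IndepK_card hS) p + h * ((k - 1) - (p : ℕ)) + ((k - 1) - (p : ℕ)) ≤ n := by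
  have hp := p.isLt
  have hlast : k - 1 < k := by omega
  have h1 := indep_iterGap hS p ⟨k - 1, hlast⟩ (by simp; omega)
  have h2 := (indep_bounds hS ⟨k - 1, hlast⟩).2
  have h3 : (h + 1) * (((k : ℕ) - 1) - (p : ℕ)) =
      h * ((k - 1) - (p : ℕ)) + ((k - 1) - (p : ℕ)) := by ring
  simp only [Fin.val_mk] at h1
  omega

lemma fwd_strictMono {S : Finset ℕ} (hS : S ∈ IndepK n h k) :
    StrictMono (fun p : Fin k => S.orderEmbOfFin (IndepK_card hS) p - h * (p : ℕ)) := by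
  intro p q hpq
  have hlt : (p : ℕ) < (q : ℕ) := hpq
  have h1 := indep_iterGap hS p q (le_of_lt hlt)
  have h2 := indep_lower hS p
  have h3 : (h + 1) * ((q : ℕ) - (p : ℕ)) = h * ((q : ℕ) - (p : ℕ)) + ((q : ℕ) - (p : ℕ)) := by
    ring
  have h4 : h * (p : ℕ) + h * ((q : ℕ) - (p : ℕ)) = h * (q : ℕ) := by
    rw [← Nat.mul_add, Nat.add_sub_cancel' (le_of_lt hlt)]
  simp only
  omega

lemma fwd_mem (hk : h * k ≤ n + h) {S : Finset ℕ} (hS : S ∈ IndepK n h k) :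
    Finset.image (fun p : Fin k => S.orderEmbOfFin (IndepK_card hS) p - h * (p : ℕ))
      Finset.univ ∈ Finset.powersetCard k (Finset.Icc 1 (n + h - h * k)) := by
  rw [Finset.mem_powersetCard]
  constructor
  · intro x hx
    simp only [Finset.mem_image, Finset.mem_univ, true_and] at hx
    obtain ⟨p, rfl⟩ := hx
    have hp := p.isLt
    have h1 := indep_lower hS p
    have h2 := indep_upper hS p
    have h3 : h * k = h * (p : ℕ) + h * ((k - 1) - (p : ℕ)) + h := by
      have hkeq : (p : ℕ) + ((k - 1) - (p : ℕ)) + 1 = k := by omega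
      calc h * k = h * ((p : ℕ) + ((k - 1) - (p : ℕ)) + 1) := by rw [hkeq]
        _ = h * (p : ℕ) + h * ((k - 1) - (p : ℕ)) + h := by ring
    rw [Finset.mem_Icc]
    omega
  · rw [Finset.card_image_of_injective _ (fwd_strictMono hS).injective]
    simp

lemma bwd_strictMono {T : Finset ℕ} (hT : T ∈ Finset.powersetCard k (Finset.Icc 1 (n + h - h * k))) :
    StrictMono (fun p : Fin k => T.orderEmbOfFin (pow_card hT) p + h * (p : ℕ)) := by
  intro p q hpq
  have h1 : T.orderEmbOfFin (pow_card hT) p < T.orderEmbOfFin (pow_card hT) q :=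
    (T.orderEmbOfFin (pow_card hT)).strictMono hpq
  have h2 : h * (p : ℕ) ≤ h * (q : ℕ) := Nat.mul_le_mul_left h (le_of_lt hpq)
  simp only
  omega

lemma bwd_bounds {T : Finset ℕ} (hT : T ∈ Finset.powersetCard k (Finset.Icc 1 (n + h - h * k)))
    (p : Fin k) : 1 ≤ T.orderEmbOfFin (pow_card hT) p ∧
      T.orderEmbOfFin (pow_card hT) p ≤ n + h - h * k := by
  have hm : T.orderEmbOfFin (pow_card hT) p ∈ T := Finset.orderEmbOfFin_mem _ _ _
  have := (Finset.mem_powersetCard.mp hT).1 hm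
  simpa [Finset.mem_Icc] using this

lemma bwd_mem (hk : h * k ≤ n + h) {T : Finset ℕ}
    (hT : T ∈ Finset.powersetCard k (Finset.Icc 1 (n + h - h * k))) :
    Finset.image (fun p : Fin k => T.orderEmbOfFin (pow_card hT) p + h * (p : ℕ))
      Finset.univ ∈ IndepK n h k := by
  rw [mem_IndepK]
  refine ⟨⟨?_, ?_⟩, ?_⟩
  · intro x hx
    simp only [Finset.mem_image, Finset.mem_univ, true_and] at hx
    obtain ⟨p, rfl⟩ := hx
    have hp := p.isLt
    have h1 := bwd_bounds hT p
    have h2 : h * (p : ℕ) ≤ h * (k - 1) := Nat.mul_le_mul_left h (by omega)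
    have h3 : h * k = h * (k - 1) + h := by
      have : k - 1 + 1 = k := by omega
      calc h * k = h * (k - 1 + 1) := by rw [this]
        _ = h * (k - 1) + h := by ring
    rw [Finset.mem_Icc]
    omega
  · intro a ha b hb hab
    simp only [Finset.mem_image, Finset.mem_univ, true_and] at ha hb
    obtain ⟨p, rfl⟩ := ha
    obtain ⟨q, rfl⟩ := hb
    rcases lt_trichotomy p q with hpq | hpq | hpq
    · have h1 : T.orderEmbOfFin (pow_card hT) p < T.orderEmbOfFin (pow_card hT) q :=
        (T.orderEmbOfFin (pow_card hT)).strictMono hpq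
      have h2 : h * ((p : ℕ) + 1) ≤ h * (q : ℕ) := Nat.mul_le_mul_left h hpq
      have h3 : h * ((p : ℕ) + 1) = h * (p : ℕ) + h := by ring
      omega
    · subst hpq; omega
    · have h1 : T.orderEmbOfFin (pow_card hT) q < T.orderEmbOfFin (pow_card hT) p :=
        (T.orderEmbOfFin (pow_card hT)).strictMono hpq
      have h2 : h * (q : ℕ) ≤ h * (p : ℕ) := Nat.mul_le_mul_left h (le_of_lt hpq)
      omega
  · rw [Finset.card_image_of_injective _ (bwd_strictMono hT).injective]
    simp

end main

theorem stmt1 (n h k : ℕ) (hk : h * k ≤ n + h) :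
    Nonempty ({S // S ∈ IndepK n h k} ≃
      {T // T ∈ Finset.powersetCard k (Finset.Icc 1 (n + h - h * k))}) := by
  have key : (IndepK n h k).card = (Finset.powersetCard k (Finset.Icc 1 (n + h - h * k))).card := by
    apply Finset.card_bij'
      (i := fun S hS => Finset.image
        (fun p : Fin k => S.orderEmbOfFin (IndepK_card hS) p - h * (p : ℕ)) Finset.univ)
      (j := fun T hT => Finset.image
        (fun p : Fin k => T.orderEmbOfFin (pow_card hT) p + h * (p : ℕ)) Finset.univ)
      (hi := fun S hS => fwd_mem hk hS)
      (hj := fun T hT => bwd_mem hk hT)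
    · -- left inverse: bwd (fwd S) = S
      intro S hS
      set f := S.orderEmbOfFin (IndepK_card hS) with hf
      set T := Finset.image (fun p : Fin k => f p - h * (p : ℕ)) Finset.univ with hT
      have hTmem := fwd_mem hk hS
      have hunique : (fun p : Fin k => f p - h * (p : ℕ)) = T.orderEmbOfFin (pow_card hTmem) := by
        apply Finset.orderEmbOfFin_unique
        · intro x
          exact Finset.mem_image_of_mem _ (Finset.mem_univ x)
        · exact fwd_strictMono hS
      calc Finset.image (fun p : Fin k => T.orderEmbOfFin (pow_card hTmem) p + h * (p : ℕ))
            Finset.univ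
          = Finset.image (fun p : Fin k => (f p - h * (p : ℕ)) + h * (p : ℕ)) Finset.univ := by
            rw [← hunique]
        _ = Finset.image f Finset.univ := by
            apply Finset.image_congr
            intro p _
            have := indep_lower hS p
            rw [← hf] at this
            simp only
            omega
        _ = S := image_univ_orderEmb (IndepK_card hS)
    · -- right inverse: fwd (bwd T) = T
      intro T hT
      set g := T.orderEmbOfFin (pow_card hT) with hg
      set S := Finset.image (fun p : Fin k => g p + h * (p : ℕ)) Finset.univ with hS
      have hSmem := bwd_mem hk hT
      have hunique : (fun p : Fin k => g p + h * (p : ℕ)) = S.orderEmbOfFin (IndepK_card hSmem) := by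
        apply Finset.orderEmbOfFin_unique
        · intro x
          exact Finset.mem_image_of_mem _ (Finset.mem_univ x)
        · exact bwd_strictMono hT
      calc Finset.image (fun p : Fin k => S.orderEmbOfFin (IndepK_card hSmem) p - h * (p : ℕ))
            Finset.univ
          = Finset.image (fun p : Fin k => (g p + h * (p : ℕ)) - h * (p : ℕ)) Finset.univ := by
            rw [← hunique]
        _ = Finset.image g Finset.univ := by
            apply Finset.image_congr
            intro p _
            simp
        _ = T := image_univ_orderEmb (pow_card hT)
  exact ⟨Finset.equivOfCardEq key⟩
end

section
/- Let H(n,h) be the number of covering relations (edges of the Hasse diagram) in the poset of independent subsets of the h-th power of a path on n vertices, ordered by inclusion. Then H(n,h) = Σ_{k≥1} k · C(n - h*k + h, k), where the sum ranges over k with 1 ≤ k ≤ ⌈n/(h+1)⌉. -/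
open Finset

/-- The number of covering pairs (S,T): T ⊆ S, |S| = |T| + 1, both independent. -/
def coverCount (n h : ℕ) : ℕ :=
  ((Indep n h ×ˢ Indep n h).filter
    (fun p => p.2 ⊆ p.1 ∧ p.1.card = p.2.card + 1)).card

lemma indep_downward {n h : ℕ} {S T : Finset ℕ} (hS : S ∈ Indep n h) (hT : T ⊆ S) :
    T ∈ Indep n h := by
  simp only [Indep, mem_filter, mem_powerset] at hS ⊢
  exact ⟨hT.trans hS.1, fun a ha b hb hab => hS.2 a (hT ha) b (hT hb) hab⟩

lemma pascal_aux (m h j : ℕ) :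
    Nat.choose (m + 1 + h - h * (j + 1)) (j + 1)
      = Nat.choose (m - h + h - h * j) j + Nat.choose (m + h - h * (j + 1)) (j + 1) := by
  have hmul : h * (j + 1) = h * j + h := by ring
  rcases le_or_gt h m with hm | hm
  · have h1 : m - h + h = m := Nat.sub_add_cancel hm
    rw [h1]
    have e1 : m + 1 + h - h * (j + 1) = m + 1 - h * j := by omega
    have e2 : m + h - h * (j + 1) = m - h * j := by omega
    rw [e1, e2]
    rcases le_or_gt (h * j) m with hj | hj
    · have e3 : m + 1 - h * j = (m - h * j) + 1 := by omega
      rw [e3, Nat.choose_succ_succ']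
    · have hj0 : j ≠ 0 := by rintro rfl; simp at hj
      obtain ⟨i, rfl⟩ := Nat.exists_eq_succ_of_ne_zero hj0
      have hj' : m < h * (i + 1) := hj
      have e3 : m + 1 - h * (i + 1) = 0 := by omega
      have e4 : m - h * (i + 1) = 0 := by omega
      rw [e3, e4]
      simp
  · have h1 : m - h = 0 := Nat.sub_eq_zero_of_le hm.le
    rw [h1, Nat.zero_add]
    cases j with
    | zero =>
      have e1 : m + 1 + h - h * (0 + 1) = m + 1 := by omega
      have e2 : m + h - h * (0 + 1) = m := by omega
      have e3 : h - h * 0 = h := by omega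
      rw [e1, e2, e3, Nat.choose_one_right, Nat.choose_one_right, Nat.choose_zero_right]
      omega
    | succ i =>
      have hle : h ≤ h * (i + 1) := Nat.le_mul_of_pos_right h (Nat.succ_pos i)
      have e1 : m + 1 + h - h * (i + 1 + 1) = 0 := by
        have : h * (i + 1 + 1) = h * (i + 1) + h := by ring
        omega
      have e2 : m + h - h * (i + 1 + 1) = 0 := by
        have : h * (i + 1 + 1) = h * (i + 1) + h := by ring
        omega
      have e3 : h - h * (i + 1) = 0 := by omega
      rw [e1, e2, e3]
      simp

lemma cardIndepK (h : ℕ) : ∀ n k : ℕ, (IndepK n h k).card = Nat.choose (n + h - h * k) k := by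
  intro n
  induction n using Nat.strong_induction_on with
  | _ n IH =>
    intro k
    match n, k with
    | n, 0 =>
      have hset : IndepK n h 0 = {∅} := by
        ext S
        simp only [IndepK, Indep, mem_filter, mem_powerset, mem_singleton,
          Finset.card_eq_zero]
        constructor
        · rintro ⟨-, h2⟩; exact h2
        · rintro rfl; simp
      rw [hset]
      simp
    | 0, k + 1 =>
      have hset : IndepK 0 h (k + 1) = ∅ := by
        ext S
        simp only [IndepK, Indep, mem_filter, mem_powerset, notMem_empty, iff_false,
          not_and]
        rintro ⟨hsub, -⟩ hcard
        have : S = ∅ := by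
          rw [← Finset.subset_empty]
          intro x hx
          have := hsub hx
          simp only [mem_Icc] at this
          omega
        rw [this] at hcard
        simp at hcard
      rw [hset]
      have : 0 + h - h * (k + 1) = 0 := by
        have : h * (k + 1) = h * k + h := by ring
        omega
      rw [this]
      simp [Nat.choose_eq_zero_of_lt]
    | m + 1, j + 1 =>
      have hsplit : ((IndepK (m + 1) h (j + 1)).filter (fun S => m + 1 ∈ S)).card
          + ((IndepK (m + 1) h (j + 1)).filter (fun S => ¬ (m + 1 ∈ S))).card
          = (IndepK (m + 1) h (j + 1)).card :=
        Finset.card_filter_add_card_filter_not _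
      have hA : (IndepK (m + 1) h (j + 1)).filter (fun S => ¬ (m + 1 ∈ S))
          = IndepK m h (j + 1) := by
        ext S
        simp only [IndepK, Indep, mem_filter, mem_powerset]
        constructor
        · rintro ⟨⟨⟨hsub, hind⟩, hcard⟩, hnot⟩
          refine ⟨⟨fun x hx => ?_, hind⟩, hcard⟩
          have h1 := hsub hx
          simp only [mem_Icc] at h1 ⊢
          have : x ≠ m + 1 := fun hxe => hnot (hxe ▸ hx)
          omega
        · rintro ⟨⟨hsub, hind⟩, hcard⟩
          have hnot : m + 1 ∉ S := by
            intro hmem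
            have := hsub hmem
            simp only [mem_Icc] at this
            omega
          refine ⟨⟨⟨fun x hx => ?_, hind⟩, hcard⟩, hnot⟩
          have h1 := hsub hx
          simp only [mem_Icc] at h1 ⊢
          omega
      have hB : (IndepK (m - h) h j).card
          = ((IndepK (m + 1) h (j + 1)).filter (fun S => m + 1 ∈ S)).card := by
        apply Finset.card_bij (fun T _ => insert (m + 1) T)
        · intro T hT
          simp only [IndepK, Indep, mem_filter, mem_powerset] at hT ⊢
          obtain ⟨⟨hsub, hind⟩, hcard⟩ := hT
          have hnotmem : m + 1 ∉ T := by
            intro hmem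
            have := hsub hmem
            simp only [mem_Icc] at this
            omega
          have hbound : ∀ x ∈ T, 1 ≤ x ∧ x + h ≤ m := by
            intro x hx
            have := hsub hx
            simp only [mem_Icc] at this
            omega
          refine ⟨⟨⟨fun x hx => ?_, ?_⟩, ?_⟩, ?_⟩
          · simp only [mem_insert] at hx
            simp only [mem_Icc]
            rcases hx with rfl | hx
            · omega
            · have := hbound x hx; omega
          · intro a ha b hb hab
            simp only [mem_insert] at ha hb
            rcases ha with rfl | ha
            · rcases hb with rfl | hb
              · omega
              · have := hbound b hb; omega
            · rcases hb with rfl | hb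
              · have := hbound a ha; omega
              · exact hind a ha b hb hab
          · rw [Finset.card_insert_of_notMem hnotmem, hcard]
          · exact mem_insert_self _ _
        · intro T₁ h₁ T₂ h₂ heq
          simp only [IndepK, Indep, mem_filter, mem_powerset] at h₁ h₂
          have hn₁ : m + 1 ∉ T₁ := by
            intro hmem; have := h₁.1.1 hmem; simp only [mem_Icc] at this; omega
          have hn₂ : m + 1 ∉ T₂ := by
            intro hmem; have := h₂.1.1 hmem; simp only [mem_Icc] at this; omega
          have := congrArg (fun s => Finset.erase s (m + 1)) heq
          simpa [Finset.erase_insert hn₁, Finset.erase_insert hn₂] using this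
        · intro S hS
          simp only [IndepK, Indep, mem_filter, mem_powerset] at hS
          obtain ⟨⟨⟨hsub, hind⟩, hcard⟩, hmem⟩ := hS
          refine ⟨S.erase (m + 1), ?_, Finset.insert_erase hmem⟩
          simp only [IndepK, Indep, mem_filter, mem_powerset]
          refine ⟨⟨fun x hx => ?_, fun a ha b hb hab =>
            hind a (Finset.mem_of_mem_erase ha) b (Finset.mem_of_mem_erase hb) hab⟩, ?_⟩
          · simp only [Finset.mem_erase] at hx
            obtain ⟨hne, hxS⟩ := hx
            have h1 := hsub hxS
            simp only [mem_Icc] at h1 ⊢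
            have hlt : x < m + 1 := by omega
            have := hind x hxS (m + 1) hmem hlt
            omega
          · rw [Finset.card_erase_of_mem hmem, hcard]
            rfl
      have IH1 : (IndepK m h (j + 1)).card = Nat.choose (m + h - h * (j + 1)) (j + 1) :=
        IH m (by omega) (j + 1)
      have IH2 : (IndepK (m - h) h j).card = Nat.choose (m - h + h - h * j) j :=
        IH (m - h) (by omega) j
      rw [pascal_aux m h j, ← IH1, ← IH2, hB, ← hA]
      omega

lemma coverCount_eq_sum (n h : ℕ) : coverCount n h = ∑ S ∈ Indep n h, S.card := by
  unfold coverCount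
  rw [Finset.card_eq_sum_card_fiberwise (f := Prod.fst) (t := Indep n h)
    (fun p hp => by
      simp only [mem_coe, mem_filter, mem_product] at hp
      exact hp.1.1)]
  apply Finset.sum_congr rfl
  intro S hS
  symm
  apply Finset.card_bij (fun a _ => ((S, S.erase a) : Finset ℕ × Finset ℕ))
  · intro a ha
    simp only [mem_filter, mem_product]
    refine ⟨⟨⟨hS, indep_downward hS (Finset.erase_subset _ _)⟩,
      Finset.erase_subset _ _, ?_⟩, trivial⟩
    rw [Finset.card_erase_of_mem ha]
    have : 0 < S.card := Finset.card_pos.2 ⟨a, ha⟩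
    omega
  · intro a₁ ha₁ a₂ ha₂ heq
    have h2 : S.erase a₁ = S.erase a₂ := congrArg Prod.snd heq
    by_contra hne
    have : a₁ ∈ S.erase a₂ := Finset.mem_erase.2 ⟨hne, ha₁⟩
    rw [← h2] at this
    exact (Finset.notMem_erase a₁ S) this
  · intro p hp
    simp only [mem_filter, mem_product] at hp
    obtain ⟨⟨⟨hp1, hp2⟩, hsub, hcard⟩, hfst⟩ := hp
    have hsub' : p.2 ⊆ S := hfst ▸ hsub
    have hcard' : S.card = p.2.card + 1 := hfst ▸ hcard
    have hss : p.2 ⊂ S := Finset.ssubset_iff_subset_ne.2 ⟨hsub', by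
      intro hTS; rw [hTS] at hcard'; omega⟩
    obtain ⟨a, haS, haT⟩ := Finset.exists_of_ssubset hss
    refine ⟨a, haS, ?_⟩
    have hTe : p.2 ⊆ S.erase a := Finset.subset_erase.2 ⟨hsub', haT⟩
    have hcar : (S.erase a).card ≤ p.2.card := by
      rw [Finset.card_erase_of_mem haS]; omega
    have hTeq : p.2 = S.erase a := Finset.eq_of_subset_of_card_le hTe hcar
    rw [← hTeq, ← hfst]

theorem stmt6 (n h : ℕ) :
    coverCount n h =
      ∑ k ∈ Finset.Icc 1 ((n + h) / (h + 1)), k * Nat.choose (n + h - h * k) k := by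
  rw [coverCount_eq_sum]
  have hmaps : ∀ S ∈ Indep n h, S.card ∈ Finset.range (n + 1) := by
    intro S hS
    simp only [Indep, mem_filter, mem_powerset] at hS
    have := Finset.card_le_card hS.1
    rw [Nat.card_Icc] at this
    simp only [Finset.mem_range]
    omega
  rw [← Finset.sum_fiberwise_of_maps_to hmaps (fun S => S.card)]
  have hstep : ∀ k ∈ Finset.range (n + 1),
      (∑ S ∈ (Indep n h).filter (fun S => S.card = k), S.card)
        = k * Nat.choose (n + h - h * k) k := by
    intro k _
    rw [Finset.sum_congr rfl (fun S hS => (Finset.mem_filter.1 hS).2)]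
    rw [Finset.sum_const, smul_eq_mul]
    have : (Indep n h).filter (fun S => S.card = k) = IndepK n h k := rfl
    rw [this, cardIndepK h n k, Nat.mul_comm]
  rw [Finset.sum_congr rfl hstep]
  symm
  apply Finset.sum_subset
  · intro k hk
    simp only [mem_Icc] at hk
    simp only [Finset.mem_range]
    have h1 : k * (h + 1) ≤ n + h := (Nat.le_div_iff_mul_le (by omega)).1 hk.2
    have h2 : h ≤ k * h := Nat.le_mul_of_pos_left h (by omega)
    nlinarith [hk.1]
  · intro k hk hnk
    simp only [mem_Icc, not_and, not_le] at hnk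
    rcases Nat.eq_zero_or_pos k with rfl | hkpos
    · simp
    · have hK := hnk hkpos
      have h1 : n + h < k * (h + 1) := (Nat.div_lt_iff_lt_mul (by omega)).1 hK
      have h2 : k * (h + 1) = h * k + k := by ring
      have : n + h - h * k < k := by omega
      rw [Nat.choose_eq_zero_of_lt this, Nat.mul_zero]
end

section
/- For the ordinary path (h = 1): the number of covering pairs in the poset of subsets of {1,...,n} containing no two consecutive integers, ordered by inclusion, equals Σ_{i=1}^{n} F_i · F_{n-i+1}, where F is the Fibonacci sequence with F_1 = F_2 = 1. -/
open Finset

lemma mem_Indep_iff {n h : ℕ} {S : Finset ℕ} :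
    S ∈ Indep n h ↔ S ⊆ Finset.Icc 1 n ∧ ∀ a ∈ S, ∀ b ∈ S, a < b → h < b - a := by
  simp [Indep]

lemma indep_mono {n : ℕ} {S : Finset ℕ} (hS : S ∈ Indep n 1) : S ∈ Indep (n+1) 1 := by
  rw [mem_Indep_iff] at hS ⊢
  refine ⟨fun a ha => ?_, hS.2⟩
  have := hS.1 ha; simp only [Finset.mem_Icc] at this ⊢; omega

lemma indep_of_not_mem {n : ℕ} {S : Finset ℕ} (hS : S ∈ Indep (n+2) 1)
    (hn : (n+2) ∉ S) : S ∈ Indep (n+1) 1 := by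
  rw [mem_Indep_iff] at hS ⊢
  refine ⟨fun a ha => ?_, hS.2⟩
  have h1 := (hS.1 ha)
  simp only [Finset.mem_Icc] at h1 ⊢
  have : a ≠ n + 2 := fun h => hn (h ▸ ha)
  omega

lemma indep_succ {n : ℕ} {S : Finset ℕ} (hS : S ∈ Indep (n+1) 1) :
    S ∈ Indep (n+2) 1 ∧ (n+2) ∉ S := by
  rw [mem_Indep_iff] at hS
  constructor
  · rw [mem_Indep_iff]
    refine ⟨fun a ha => ?_, hS.2⟩
    have := hS.1 ha; simp only [Finset.mem_Icc] at this ⊢; omega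
  · intro h
    have := hS.1 h; simp only [Finset.mem_Icc] at this; omega

lemma insert_mem_Indep {n : ℕ} {S : Finset ℕ} (hS : S ∈ Indep n 1) :
    insert (n+2) S ∈ Indep (n+2) 1 ∧ (n+2) ∉ S := by
  rw [mem_Indep_iff] at hS
  have hnot : (n+2) ∉ S := fun h => by
    have := hS.1 h; simp only [Finset.mem_Icc] at this; omega
  refine ⟨mem_Indep_iff.2 ⟨fun a ha => ?_, fun a ha b hb hab => ?_⟩, hnot⟩
  · rcases Finset.mem_insert.1 ha with rfl | ha
    · simp
    · have := hS.1 ha; simp only [Finset.mem_Icc] at this ⊢; omega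
  · rcases Finset.mem_insert.1 ha with rfl | ha <;> rcases Finset.mem_insert.1 hb with rfl | hb
    · omega
    · have := hS.1 hb; simp only [Finset.mem_Icc] at this; omega
    · have := hS.1 ha; simp only [Finset.mem_Icc] at this; omega
    · exact hS.2 a ha b hb hab

lemma erase_mem_Indep {n : ℕ} {S : Finset ℕ} (hS : S ∈ Indep (n+2) 1)
    (hmem : (n+2) ∈ S) : S.erase (n+2) ∈ Indep n 1 := by
  rw [mem_Indep_iff] at hS ⊢
  constructor
  · intro a ha
    have ha' := Finset.mem_of_mem_erase ha
    have hne := Finset.ne_of_mem_erase ha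
    have h1 := hS.1 ha'
    simp only [Finset.mem_Icc] at h1 ⊢
    have hlt : a < n + 2 := by omega
    have := hS.2 a ha' (n+2) hmem hlt
    omega
  · exact fun a ha b hb hab =>
      hS.2 a (Finset.mem_of_mem_erase ha) b (Finset.mem_of_mem_erase hb) hab

lemma indep_card (n : ℕ) : (Indep n 1).card = Nat.fib (n+2) := by
  induction n using Nat.twoStepInduction with
  | zero => decide
  | one => decide
  | more n ih1 ih2 =>
    have hsplit := Finset.card_filter_add_card_filter_not
      (s := Indep (n+2) 1) (p := fun S => (n+2) ∈ S)
    have h1 : ((Indep (n+2) 1).filter (fun S => (n+2) ∉ S)) = Indep (n+1) 1 := by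
      ext S
      simp only [Finset.mem_filter]
      exact ⟨fun ⟨h, hn⟩ => indep_of_not_mem h hn, fun h => ⟨(indep_succ h).1, (indep_succ h).2⟩⟩
    have h2 : ((Indep (n+2) 1).filter (fun S => (n+2) ∈ S)).card = (Indep n 1).card := by
      refine Finset.card_bij' (fun S _ => S.erase (n+2)) (fun T _ => insert (n+2) T)
        ?_ ?_ ?_ ?_
      · intro S hS
        simp only [Finset.mem_filter] at hS
        exact erase_mem_Indep hS.1 hS.2
      · intro T hT
        simp only [Finset.mem_filter]
        exact ⟨(insert_mem_Indep hT).1, Finset.mem_insert_self _ _⟩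
      · intro S hS
        simp only [Finset.mem_filter] at hS
        exact Finset.insert_erase hS.2
      · intro T hT
        exact Finset.erase_insert (insert_mem_Indep hT).2
    rw [h2, h1] at hsplit
    have : Nat.fib (n+2+2) = Nat.fib (n+2) + Nat.fib (n+1+2) := by
      rw [Nat.fib_add_two]
    omega

lemma mem_cover_iff {n : ℕ} {p : Finset ℕ × Finset ℕ} :
    p ∈ ((Indep n 1 ×ˢ Indep n 1).filter
      (fun p => p.2 ⊆ p.1 ∧ p.1.card = p.2.card + 1)) ↔
    p.1 ∈ Indep n 1 ∧ p.2 ∈ Indep n 1 ∧ p.2 ⊆ p.1 ∧ p.1.card = p.2.card + 1 := by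
  simp only [Finset.mem_filter, Finset.mem_product]
  tauto

lemma coverCount_rec (n : ℕ) :
    coverCount (n+2) 1 = coverCount (n+1) 1 + coverCount n 1 + Nat.fib (n+2) := by
  set E := ((Indep (n+2) 1 ×ˢ Indep (n+2) 1).filter
    (fun p => p.2 ⊆ p.1 ∧ p.1.card = p.2.card + 1)) with hE
  have hsplit := Finset.card_filter_add_card_filter_not
    (s := E) (p := fun p => (n+2) ∈ p.1)
  have hsplit2 := Finset.card_filter_add_card_filter_not
    (s := E.filter (fun p => (n+2) ∈ p.1)) (p := fun p => (n+2) ∈ p.2)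
  -- piece 1 : n+2 ∉ p.1
  have h1 : (E.filter (fun p => (n+2) ∉ p.1)) =
      ((Indep (n+1) 1 ×ˢ Indep (n+1) 1).filter
        (fun p => p.2 ⊆ p.1 ∧ p.1.card = p.2.card + 1)) := by
    ext p
    simp only [Finset.mem_filter, Finset.mem_product, hE]
    constructor
    · rintro ⟨⟨⟨h1', h2'⟩, h3', h4'⟩, h5'⟩
      exact ⟨⟨indep_of_not_mem h1' h5', indep_of_not_mem h2' (fun h => h5' (h3' h))⟩, h3', h4'⟩
    · rintro ⟨⟨h1', h2'⟩, h3', h4'⟩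
      exact ⟨⟨⟨(indep_succ h1').1, (indep_succ h2').1⟩, h3', h4'⟩, (indep_succ h1').2⟩
  -- piece 2 : n+2 ∈ both
  have h2 : ((E.filter (fun p => (n+2) ∈ p.1)).filter (fun p => (n+2) ∈ p.2)).card
      = coverCount n 1 := by
    rw [coverCount]
    refine Finset.card_bij' (fun p _ => (p.1.erase (n+2), p.2.erase (n+2)))
      (fun p _ => (insert (n+2) p.1, insert (n+2) p.2)) ?_ ?_ ?_ ?_
    · rintro p hp
      simp only [Finset.mem_filter, hE, Finset.mem_product] at hp
      obtain ⟨⟨⟨⟨ha, hb⟩, hsub, hcard⟩, hm1⟩, hm2⟩ := hp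
      simp only [Finset.mem_filter, Finset.mem_product]
      refine ⟨⟨erase_mem_Indep ha hm1, erase_mem_Indep hb hm2⟩,
        Finset.erase_subset_erase _ hsub, ?_⟩
      rw [Finset.card_erase_of_mem hm1, Finset.card_erase_of_mem hm2]
      have : 1 ≤ p.2.card := Finset.card_pos.2 ⟨_, hm2⟩
      omega
    · rintro p hp
      simp only [Finset.mem_filter, Finset.mem_product] at hp
      obtain ⟨⟨ha, hb⟩, hsub, hcard⟩ := hp
      simp only [Finset.mem_filter, hE, Finset.mem_product]
      refine ⟨⟨⟨⟨(insert_mem_Indep ha).1, (insert_mem_Indep hb).1⟩,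
        Finset.insert_subset_insert _ hsub, ?_⟩, Finset.mem_insert_self _ _⟩,
        Finset.mem_insert_self _ _⟩
      rw [Finset.card_insert_of_notMem (insert_mem_Indep ha).2,
        Finset.card_insert_of_notMem (insert_mem_Indep hb).2]
      omega
    · rintro p hp
      simp only [Finset.mem_filter, hE] at hp
      obtain ⟨⟨_, hm1⟩, hm2⟩ := hp
      simp [Finset.insert_erase hm1, Finset.insert_erase hm2]
    · rintro p hp
      simp only [Finset.mem_filter, Finset.mem_product] at hp
      obtain ⟨⟨ha, hb⟩, _, _⟩ := hp
      simp [Finset.erase_insert (insert_mem_Indep ha).2,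
        Finset.erase_insert (insert_mem_Indep hb).2]
  -- piece 3 : n+2 ∈ p.1, n+2 ∉ p.2
  have h3 : ((E.filter (fun p => (n+2) ∈ p.1)).filter (fun p => (n+2) ∉ p.2)).card
      = (Indep n 1).card := by
    refine Finset.card_bij' (fun p _ => p.2) (fun T _ => (insert (n+2) T, T)) ?_ ?_ ?_ ?_
    · rintro p hp
      simp only [Finset.mem_filter, hE, Finset.mem_product] at hp
      obtain ⟨⟨⟨⟨ha, hb⟩, hsub, hcard⟩, hm1⟩, hm2⟩ := hp
      have hp1 : p.1 = insert (n+2) p.2 := by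
        apply (Finset.eq_of_subset_of_card_le (Finset.insert_subset hm1 hsub) ?_).symm
        rw [Finset.card_insert_of_notMem hm2]; omega
      have : p.2 = p.1.erase (n+2) := by
        rw [hp1, Finset.erase_insert hm2]
      show p.2 ∈ Indep n 1
      rw [this]
      exact erase_mem_Indep ha hm1
    · rintro T hT
      simp only [Finset.mem_filter, hE, Finset.mem_product]
      have hi := insert_mem_Indep hT
      refine ⟨⟨⟨⟨hi.1, indep_mono (indep_mono hT)⟩, Finset.subset_insert _ _, ?_⟩,
        Finset.mem_insert_self _ _⟩, hi.2⟩
      rw [Finset.card_insert_of_notMem hi.2]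
    · rintro p hp
      simp only [Finset.mem_filter, hE, Finset.mem_product] at hp
      obtain ⟨⟨⟨⟨ha, hb⟩, hsub, hcard⟩, hm1⟩, hm2⟩ := hp
      have hp1 : p.1 = insert (n+2) p.2 := by
        apply (Finset.eq_of_subset_of_card_le (Finset.insert_subset hm1 hsub) ?_).symm
        rw [Finset.card_insert_of_notMem hm2]; omega
      exact Prod.ext hp1.symm rfl
    · rintro T hT
      rfl
  rw [h2] at hsplit2
  rw [h3] at hsplit2
  rw [h1] at hsplit
  rw [indep_card] at hsplit2
  have hcc : coverCount (n+2) 1 = E.card := rfl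
  have hc1 : coverCount (n+1) 1 =
      (((Indep (n+1) 1 ×ˢ Indep (n+1) 1).filter
        (fun p => p.2 ⊆ p.1 ∧ p.1.card = p.2.card + 1))).card := rfl
  rw [← hc1] at hsplit
  rw [hcc]
  omega

lemma rhs_rec (n : ℕ) :
    ∑ i ∈ Finset.Icc 1 (n+2), Nat.fib i * Nat.fib (n+2 - i + 1) =
    (∑ i ∈ Finset.Icc 1 (n+1), Nat.fib i * Nat.fib (n+1 - i + 1)) +
    (∑ i ∈ Finset.Icc 1 n, Nat.fib i * Nat.fib (n - i + 1)) + Nat.fib (n+2) := by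
  rw [Finset.sum_Icc_succ_top (by omega : 1 ≤ n + 2)]
  have htop : Nat.fib (n+2) * Nat.fib (n+2 - (n+2) + 1) = Nat.fib (n+2) := by
    simp
  rw [htop]
  have hmid : ∑ i ∈ Finset.Icc 1 (n+1), Nat.fib i * Nat.fib (n+2 - i + 1) =
      (∑ i ∈ Finset.Icc 1 (n+1), Nat.fib i * Nat.fib (n+1 - i + 1)) +
      (∑ i ∈ Finset.Icc 1 (n+1), Nat.fib i * Nat.fib (n+1 - i)) := by
    rw [← Finset.sum_add_distrib]
    apply Finset.sum_congr rfl
    intro i hi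
    simp only [Finset.mem_Icc] at hi
    have h1 : n + 2 - i + 1 = (n + 1 - i) + 2 := by omega
    have h2 : n + 1 - i + 1 = (n + 1 - i) + 1 := by omega
    rw [h1, h2, Nat.fib_add_two, Nat.mul_add]
    ring
  rw [hmid]
  have hlast : ∑ i ∈ Finset.Icc 1 (n+1), Nat.fib i * Nat.fib (n+1 - i) =
      ∑ i ∈ Finset.Icc 1 n, Nat.fib i * Nat.fib (n - i + 1) := by
    rw [Finset.sum_Icc_succ_top (by omega : 1 ≤ n + 1)]
    simp only [Nat.sub_self, Nat.fib_zero, Nat.mul_zero, Nat.add_zero]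
    apply Finset.sum_congr rfl
    intro i hi
    simp only [Finset.mem_Icc] at hi
    have : n + 1 - i = n - i + 1 := by omega
    rw [this]
  rw [hlast]

theorem stmt13 (n : ℕ) :
    coverCount n 1 = ∑ i ∈ Finset.Icc 1 n, Nat.fib i * Nat.fib (n - i + 1) := by
  induction n using Nat.twoStepInduction with
  | zero => decide
  | one => decide
  | more n ih1 ih2 =>
    rw [coverCount_rec, rhs_rec, ih1, ih2]
end
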